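/- If b : ℝᵈ × ℝᵈ → ℝᵈ satisfies |b(x,x') - b(y,y')| ≤ g·(|x-y| + |x'-y'|)·(1 + |x|^α + |y|^α + |x'|^α + |y'|^α) for some g ≥ 0, α > 0, then with p = α + 1, the drift B(x,μ) = ∫ b(x,x') dμ(x') satisfies |B(x,μ) - B(y,ν)| ≤ g·(|x-y| + d_p(μ,ν))·(1 + |x|^α + |y|^α + ‖μ‖_p^α + ‖ν‖_p^α) for all μ, ν ∈ 𝒫_p(ℝᵈ). -/

import Mathlib

open MeasureTheory

/-- A coupling of two measures. -/
def IsCoupling {E : Type*} [MeasurableSpace E]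
    (m : Measure (E × E)) (μ ν : Measure E) : Prop :=
  Measure.map Prod.fst m = μ ∧ Measure.map Prod.snd m = ν

/-- The `p`-Wasserstein distance. -/
noncomputable def wassersteinDist {E : Type*} [MeasurableSpace E] [NormedAddCommGroup E]
    (p : ℝ) (μ ν : Measure E) : ℝ :=
  sInf {c : ℝ | ∃ m : Measure (E × E), IsProbabilityMeasure m ∧ IsCoupling m μ ν ∧
    c = (∫ z, ‖z.1 - z.2‖ ^ p ∂m) ^ (1 / p)}

/-- The `p`-th moment norm `‖μ‖_p`. -/
noncomputable def momentP {E : Type*} [MeasurableSpace E] [NormedAddCommGroup E]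
    (p : ℝ) (μ : Measure E) : ℝ :=
  (∫ x, ‖x‖ ^ p ∂μ) ^ (1 / p)

open scoped ENNReal

lemma memLp_of_int {γ E : Type*} [MeasurableSpace γ] [NormedAddCommGroup E] {m : Measure γ}
    {f : γ → E} {p : ℝ} (hp : 0 < p) (hsm : AEStronglyMeasurable f m)
    (hint : Integrable (fun z => ‖f z‖ ^ p) m) : MemLp f (ENNReal.ofReal p) m := by
  have hq0 : (ENNReal.ofReal p) ≠ 0 := by simp [not_le.mpr hp]
  have hqt : (ENNReal.ofReal p) ≠ ∞ := ENNReal.ofReal_ne_top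
  refine (memLp_norm_rpow_iff hsm hq0 hqt).mp ?_
  rw [ENNReal.div_self hq0 hqt, ENNReal.toReal_ofReal hp.le, memLp_one_iff_integrable]
  exact hint

lemma aux_conj {α : ℝ} (hα : 0 < α) : (α + 1).HolderConjugate ((α + 1) / α) := by
  rw [Real.holderConjugate_iff]
  constructor
  · linarith
  · rw [inv_div]
    field_simp
    ring

lemma aux_rpow_le {a s α : ℝ} (ha : 0 ≤ a) (hs : 0 ≤ s) (hsα : s ≤ α + 1) :
    a ^ s ≤ a ^ (α + 1) + 1 := by
  rcases le_total a 1 with h | h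
  · have : a ^ s ≤ 1 := Real.rpow_le_one ha h hs
    have h2 : 0 ≤ a ^ (α + 1) := Real.rpow_nonneg ha _
    linarith
  · have : a ^ s ≤ a ^ (α + 1) := Real.rpow_le_rpow_of_exponent_le h hsα
    linarith

lemma aux_young {a c α : ℝ} (hα : 0 < α) (ha : 0 ≤ a) (hc : 0 ≤ c) :
    a * c ^ α ≤ a ^ (α + 1) + c ^ (α + 1) := by
  have hconj := aux_conj hα
  have h := Real.young_inequality_of_nonneg ha (Real.rpow_nonneg hc α) hconj
  have h2 : (c ^ α) ^ ((α + 1) / α) = c ^ (α + 1) := by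
    rw [← Real.rpow_mul hc]
    congr 1
    field_simp
  rw [h2] at h
  have d1 : a ^ (α + 1) / (α + 1) ≤ a ^ (α + 1) :=
    div_le_self (Real.rpow_nonneg ha _) (by linarith)
  have d2 : c ^ (α + 1) / ((α + 1) / α) ≤ c ^ (α + 1) :=
    div_le_self (Real.rpow_nonneg hc _) ((one_le_div hα).mpr (by linarith))
  linarith

-- moment bound: for a probability measure, ∫ ‖u‖^α ≤ momentP (α+1) ^ α, given finite (α+1) moment
lemma aux_moment {E : Type*} [MeasurableSpace E] [NormedAddCommGroup E] [BorelSpace E]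
    {μ : Measure E} [IsProbabilityMeasure μ] {α : ℝ} (hα : 0 < α)
    (hμ : Integrable (fun x => ‖x‖ ^ (α + 1)) μ) :
    ∫ u, ‖u‖ ^ α ∂μ ≤ momentP (α + 1) μ ^ α := by
  have hconj := (aux_conj hα).symm
  have hαsm : AEStronglyMeasurable (fun u : E => ‖u‖ ^ α) μ :=
    (continuous_norm.rpow_const fun _ => Or.inr hα.le).aestronglyMeasurable
  have Memf : MemLp (fun u : E => ‖u‖ ^ α) (ENNReal.ofReal ((α + 1) / α)) μ := by
    refine memLp_of_int (by positivity) hαsm (hμ.congr (ae_of_all _ fun u => ?_))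
    show ‖u‖ ^ (α + 1) = ‖‖u‖ ^ α‖ ^ ((α + 1) / α)
    rw [Real.norm_of_nonneg (Real.rpow_nonneg (norm_nonneg u) α),
      ← Real.rpow_mul (norm_nonneg u)]
    congr 1
    field_simp
  have Mem1 : MemLp (fun _ : E => (1 : ℝ)) (ENNReal.ofReal (α + 1)) μ := memLp_const 1
  have h := integral_mul_le_Lp_mul_Lq_of_nonneg hconj
    (ae_of_all _ fun u => Real.rpow_nonneg (norm_nonneg u) α)
    (ae_of_all _ fun _ => zero_le_one) Memf Mem1
  simp only [mul_one, Real.one_rpow, integral_const, measure_univ, probReal_univ, ENNReal.toReal_one,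
    one_smul, smul_eq_mul] at h
  have hI : ∫ u, (‖u‖ ^ α) ^ ((α + 1) / α) ∂μ = ∫ u, ‖u‖ ^ (α + 1) ∂μ :=
    integral_congr_ae (ae_of_all _ fun u => by
      show (‖u‖ ^ α) ^ ((α + 1) / α) = ‖u‖ ^ (α + 1)
      rw [← Real.rpow_mul (norm_nonneg u)]
      congr 1
      field_simp)
  rw [hI] at h
  have hX : 0 ≤ ∫ u, ‖u‖ ^ (α + 1) ∂μ :=
    integral_nonneg fun u => Real.rpow_nonneg (norm_nonneg u) _
  have hexp : 1 / ((α + 1) / α) = 1 / (α + 1) * α := by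
    field_simp
  rw [hexp] at h
  unfold momentP
  rw [← Real.rpow_mul hX]
  exact h

lemma aux_holder {γ : Type*} [MeasurableSpace γ] {m : Measure γ} [IsProbabilityMeasure m]
    {w h : γ → ℝ} {α : ℝ} (hα : 0 < α) (hw0 : ∀ z, 0 ≤ w z) (hh0 : ∀ z, 0 ≤ h z)
    (hwsm : AEStronglyMeasurable w m) (hhsm : AEStronglyMeasurable (fun z => h z ^ α) m)
    (hwp : Integrable (fun z => w z ^ (α + 1)) m)
    (hhp : Integrable (fun z => h z ^ (α + 1)) m) :
    ∫ z, w z * h z ^ α ∂m ≤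
      (∫ z, w z ^ (α + 1) ∂m) ^ (1 / (α + 1)) *
        (∫ z, h z ^ (α + 1) ∂m) ^ (1 / (α + 1) * α) := by
  have hconj := aux_conj hα
  have Memw : MemLp w (ENNReal.ofReal (α + 1)) m := by
    refine memLp_of_int (by linarith) hwsm (hwp.congr (ae_of_all _ fun z => ?_))
    show w z ^ (α + 1) = ‖w z‖ ^ (α + 1)
    rw [Real.norm_of_nonneg (hw0 z)]
  have Memh : MemLp (fun z => h z ^ α) (ENNReal.ofReal ((α + 1) / α)) m := by
    refine memLp_of_int (by positivity) hhsm (hhp.congr (ae_of_all _ fun z => ?_))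
    show h z ^ (α + 1) = ‖h z ^ α‖ ^ ((α + 1) / α)
    rw [Real.norm_of_nonneg (Real.rpow_nonneg (hh0 z) α), ← Real.rpow_mul (hh0 z)]
    congr 1
    field_simp
  have hle := integral_mul_le_Lp_mul_Lq_of_nonneg hconj
    (ae_of_all _ hw0) (ae_of_all _ fun z => Real.rpow_nonneg (hh0 z) α) Memw Memh
  have hI : ∫ z, (h z ^ α) ^ ((α + 1) / α) ∂m = ∫ z, h z ^ (α + 1) ∂m :=
    integral_congr_ae (ae_of_all _ fun z => by
      show (h z ^ α) ^ ((α + 1) / α) = h z ^ (α + 1)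
      rw [← Real.rpow_mul (hh0 z)]
      congr 1
      field_simp)
  have hexp : 1 / ((α + 1) / α) = 1 / (α + 1) * α := by field_simp
  rw [hI, hexp] at hle
  exact hle

lemma core {d : ℕ} (g α : ℝ) (hg : 0 ≤ g) (hα : 0 < α)
    (b : EuclideanSpace ℝ (Fin d) → EuclideanSpace ℝ (Fin d) → EuclideanSpace ℝ (Fin d))
    (hb : ∀ x y x' y', ‖b x x' - b y y'‖ ≤
      g * (‖x - y‖ + ‖x' - y'‖) * (1 + ‖x‖ ^ α + ‖y‖ ^ α + ‖x'‖ ^ α + ‖y'‖ ^ α))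
    (μ ν : Measure (EuclideanSpace ℝ (Fin d)))
    [IsProbabilityMeasure μ] [IsProbabilityMeasure ν]
    (hμ : Integrable (fun x => ‖x‖ ^ (α + 1)) μ)
    (hν : Integrable (fun x => ‖x‖ ^ (α + 1)) ν)
    (hbμ : ∀ x, Integrable (fun x' => b x x') μ)
    (hbν : ∀ x, Integrable (fun x' => b x x') ν)
    (x y : EuclideanSpace ℝ (Fin d))
    (m : Measure (EuclideanSpace ℝ (Fin d) × EuclideanSpace ℝ (Fin d)))
    [IsProbabilityMeasure m]
    (h1 : Measure.map Prod.fst m = μ) (h2 : Measure.map Prod.snd m = ν) :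
    ‖(∫ x', b x x' ∂μ) - ∫ x', b y x' ∂ν‖ ≤
      g * (‖x - y‖ + (∫ z, ‖z.1 - z.2‖ ^ (α + 1) ∂m) ^ (1 / (α + 1))) *
        (1 + ‖x‖ ^ α + ‖y‖ ^ α + momentP (α + 1) μ ^ α + momentP (α + 1) ν ^ α) := by
  have hp0 : (0:ℝ) < α + 1 := by linarith
  have hfst : AEMeasurable (Prod.fst : EuclideanSpace ℝ (Fin d) × EuclideanSpace ℝ (Fin d) → EuclideanSpace ℝ (Fin d)) m := measurable_fst.aemeasurable
  have hsnd : AEMeasurable (Prod.snd : EuclideanSpace ℝ (Fin d) × EuclideanSpace ℝ (Fin d) → EuclideanSpace ℝ (Fin d)) m := measurable_snd.aemeasurable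
  -- continuity facts
  have cw : Continuous fun z : EuclideanSpace ℝ (Fin d) × EuclideanSpace ℝ (Fin d) => ‖z.1 - z.2‖ := (continuous_fst.sub continuous_snd).norm
  have cn1 : Continuous fun z : EuclideanSpace ℝ (Fin d) × EuclideanSpace ℝ (Fin d) => ‖z.1‖ := continuous_fst.norm
  have cn2 : Continuous fun z : EuclideanSpace ℝ (Fin d) × EuclideanSpace ℝ (Fin d) => ‖z.2‖ := continuous_snd.norm
  -- integrability of moments under m
  have Iz1p : Integrable (fun z : EuclideanSpace ℝ (Fin d) × EuclideanSpace ℝ (Fin d) => ‖z.1‖ ^ (α + 1)) m := by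
    have h := hμ; rw [← h1] at h
    simpa [Function.comp_def] using (integrable_map_measure
      ((continuous_norm.rpow_const fun _ => Or.inr hp0.le).aestronglyMeasurable) hfst).mp h
  have Iz2p : Integrable (fun z : EuclideanSpace ℝ (Fin d) × EuclideanSpace ℝ (Fin d) => ‖z.2‖ ^ (α + 1)) m := by
    have h := hν; rw [← h2] at h
    simpa [Function.comp_def] using (integrable_map_measure
      ((continuous_norm.rpow_const fun _ => Or.inr hp0.le).aestronglyMeasurable) hsnd).mp h
  have Iwp : Integrable (fun z : EuclideanSpace ℝ (Fin d) × EuclideanSpace ℝ (Fin d) => ‖z.1 - z.2‖ ^ (α + 1)) m := by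
    refine ((Iz1p.add Iz2p).const_mul (2 ^ (α + 1))).mono'
      ((cw.rpow_const fun _ => Or.inr hp0.le).aestronglyMeasurable)
      (ae_of_all _ fun z => ?_)
    rw [Real.norm_of_nonneg (Real.rpow_nonneg (norm_nonneg _) _)]
    calc ‖z.1 - z.2‖ ^ (α + 1) ≤ (‖z.1‖ + ‖z.2‖) ^ (α + 1) :=
          Real.rpow_le_rpow (norm_nonneg _) (norm_sub_le _ _) hp0.le
      _ ≤ (2 * max ‖z.1‖ ‖z.2‖) ^ (α + 1) := by
          refine Real.rpow_le_rpow (by positivity) ?_ hp0.le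
          rw [two_mul]
          exact add_le_add (le_max_left _ _) (le_max_right _ _)
      _ = 2 ^ (α + 1) * max ‖z.1‖ ‖z.2‖ ^ (α + 1) :=
          Real.mul_rpow (by norm_num) (le_max_of_le_left (norm_nonneg _))
      _ ≤ 2 ^ (α + 1) * (‖z.1‖ ^ (α + 1) + ‖z.2‖ ^ (α + 1)) := by
          refine mul_le_mul_of_nonneg_left ?_ (by positivity)
          rcases max_cases ‖z.1‖ ‖z.2‖ with ⟨hm, _⟩ | ⟨hm, _⟩ <;> rw [hm]
          · nlinarith [Real.rpow_nonneg (norm_nonneg z.2) (α + 1)]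
          · nlinarith [Real.rpow_nonneg (norm_nonneg z.1) (α + 1)]
  have Iw : Integrable (fun z : EuclideanSpace ℝ (Fin d) × EuclideanSpace ℝ (Fin d) => ‖z.1 - z.2‖) m := by
    refine (Iwp.add (integrable_const 1)).mono' cw.aestronglyMeasurable
      (ae_of_all _ fun z => ?_)
    rw [Real.norm_of_nonneg (norm_nonneg _)]
    calc ‖z.1 - z.2‖ = ‖z.1 - z.2‖ ^ (1:ℝ) := (Real.rpow_one _).symm
      _ ≤ ‖z.1 - z.2‖ ^ (α + 1) + 1 := aux_rpow_le (norm_nonneg _) one_pos.le (by linarith)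
  have Iz1α : Integrable (fun z : EuclideanSpace ℝ (Fin d) × EuclideanSpace ℝ (Fin d) => ‖z.1‖ ^ α) m := by
    refine (Iz1p.add (integrable_const 1)).mono'
      ((cn1.rpow_const fun _ => Or.inr hα.le).aestronglyMeasurable) (ae_of_all _ fun z => ?_)
    rw [Real.norm_of_nonneg (Real.rpow_nonneg (norm_nonneg _) _)]
    exact aux_rpow_le (norm_nonneg _) hα.le (by linarith)
  have Iz2α : Integrable (fun z : EuclideanSpace ℝ (Fin d) × EuclideanSpace ℝ (Fin d) => ‖z.2‖ ^ α) m := by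
    refine (Iz2p.add (integrable_const 1)).mono'
      ((cn2.rpow_const fun _ => Or.inr hα.le).aestronglyMeasurable) (ae_of_all _ fun z => ?_)
    rw [Real.norm_of_nonneg (Real.rpow_nonneg (norm_nonneg _) _)]
    exact aux_rpow_le (norm_nonneg _) hα.le (by linarith)
  have Iwz1 : Integrable (fun z : EuclideanSpace ℝ (Fin d) × EuclideanSpace ℝ (Fin d) => ‖z.1 - z.2‖ * ‖z.1‖ ^ α) m := by
    refine (Iwp.add Iz1p).mono'
      (cw.mul (cn1.rpow_const fun _ => Or.inr hα.le)).aestronglyMeasurable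
      (ae_of_all _ fun z => ?_)
    rw [Real.norm_of_nonneg (mul_nonneg (norm_nonneg _) (Real.rpow_nonneg (norm_nonneg _) _))]
    exact aux_young hα (norm_nonneg _) (norm_nonneg _)
  have Iwz2 : Integrable (fun z : EuclideanSpace ℝ (Fin d) × EuclideanSpace ℝ (Fin d) => ‖z.1 - z.2‖ * ‖z.2‖ ^ α) m := by
    refine (Iwp.add Iz2p).mono'
      (cw.mul (cn2.rpow_const fun _ => Or.inr hα.le)).aestronglyMeasurable
      (ae_of_all _ fun z => ?_)
    rw [Real.norm_of_nonneg (mul_nonneg (norm_nonneg _) (Real.rpow_nonneg (norm_nonneg _) _))]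
    exact aux_young hα (norm_nonneg _) (norm_nonneg _)
  -- integrability of b-compositions
  have Ib1 : Integrable (fun z : EuclideanSpace ℝ (Fin d) × EuclideanSpace ℝ (Fin d) => b x z.1) m := by
    have h := hbμ x; rw [← h1] at h
    simpa [Function.comp_def] using (integrable_map_measure h.1 hfst).mp h
  have Ib2 : Integrable (fun z : EuclideanSpace ℝ (Fin d) × EuclideanSpace ℝ (Fin d) => b y z.2) m := by
    have h := hbν y; rw [← h2] at h
    simpa [Function.comp_def] using (integrable_map_measure h.1 hsnd).mp h
  -- rewrite the difference of integrals
  have e1 : ∫ x', b x x' ∂μ = ∫ z, b x z.1 ∂m := by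
    have hsm : AEStronglyMeasurable (fun x' => b x x') (Measure.map Prod.fst m) := by
      rw [h1]; exact (hbμ x).1
    rw [← h1, integral_map hfst hsm]
  have e2 : ∫ x', b y x' ∂ν = ∫ z, b y z.2 ∂m := by
    have hsm : AEStronglyMeasurable (fun x' => b y x') (Measure.map Prod.snd m) := by
      rw [h2]; exact (hbν y).1
    rw [← h2, integral_map hsnd hsm]
  rw [e1, e2, ← integral_sub Ib1 Ib2]
  have regK : (fun z : EuclideanSpace ℝ (Fin d) × EuclideanSpace ℝ (Fin d) =>
      1 + ‖x‖ ^ α + ‖y‖ ^ α + ‖z.1‖ ^ α + ‖z.2‖ ^ α)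
      = fun z => (1 + ‖x‖ ^ α + ‖y‖ ^ α) + (‖z.1‖ ^ α + ‖z.2‖ ^ α) := by
    funext z; ring
  have regwK : (fun z : EuclideanSpace ℝ (Fin d) × EuclideanSpace ℝ (Fin d) =>
      ‖z.1 - z.2‖ * (1 + ‖x‖ ^ α + ‖y‖ ^ α + ‖z.1‖ ^ α + ‖z.2‖ ^ α))
      = fun z => (1 + ‖x‖ ^ α + ‖y‖ ^ α) * ‖z.1 - z.2‖ +
          (‖z.1 - z.2‖ * ‖z.1‖ ^ α + ‖z.1 - z.2‖ * ‖z.2‖ ^ α) := by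
    funext z; ring
  have IK : Integrable (fun z : EuclideanSpace ℝ (Fin d) × EuclideanSpace ℝ (Fin d) =>
      1 + ‖x‖ ^ α + ‖y‖ ^ α + ‖z.1‖ ^ α + ‖z.2‖ ^ α) m := by
    rw [regK]; exact (integrable_const _).add (Iz1α.add Iz2α)
  have IwK : Integrable (fun z : EuclideanSpace ℝ (Fin d) × EuclideanSpace ℝ (Fin d) =>
      ‖z.1 - z.2‖ * (1 + ‖x‖ ^ α + ‖y‖ ^ α + ‖z.1‖ ^ α + ‖z.2‖ ^ α)) m := by
    rw [regwK]; exact (Iw.const_mul _).add (Iwz1.add Iwz2)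
  have step1 : ‖∫ z, (b x z.1 - b y z.2) ∂m‖ ≤
      ∫ z, (g * ‖x - y‖ * (1 + ‖x‖ ^ α + ‖y‖ ^ α + ‖z.1‖ ^ α + ‖z.2‖ ^ α) +
        g * (‖z.1 - z.2‖ * (1 + ‖x‖ ^ α + ‖y‖ ^ α + ‖z.1‖ ^ α + ‖z.2‖ ^ α))) ∂m := by
    refine (norm_integral_le_integral_norm _).trans (integral_mono (Ib1.sub Ib2).norm
      ((IK.const_mul _).add (IwK.const_mul _)) fun z => ?_)
    have h := hb x y z.1 z.2
    calc ‖b x z.1 - b y z.2‖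
        ≤ g * (‖x - y‖ + ‖z.1 - z.2‖) * (1 + ‖x‖ ^ α + ‖y‖ ^ α + ‖z.1‖ ^ α + ‖z.2‖ ^ α) := h
      _ = g * ‖x - y‖ * (1 + ‖x‖ ^ α + ‖y‖ ^ α + ‖z.1‖ ^ α + ‖z.2‖ ^ α) +
          g * (‖z.1 - z.2‖ * (1 + ‖x‖ ^ α + ‖y‖ ^ α + ‖z.1‖ ^ α + ‖z.2‖ ^ α)) := by ring
  have step2 : ∫ z, (g * ‖x - y‖ * (1 + ‖x‖ ^ α + ‖y‖ ^ α + ‖z.1‖ ^ α + ‖z.2‖ ^ α) +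
        g * (‖z.1 - z.2‖ * (1 + ‖x‖ ^ α + ‖y‖ ^ α + ‖z.1‖ ^ α + ‖z.2‖ ^ α))) ∂m
      = g * ‖x - y‖ * (∫ z, (1 + ‖x‖ ^ α + ‖y‖ ^ α + ‖z.1‖ ^ α + ‖z.2‖ ^ α) ∂m) +
        g * ∫ z, ‖z.1 - z.2‖ * (1 + ‖x‖ ^ α + ‖y‖ ^ α + ‖z.1‖ ^ α + ‖z.2‖ ^ α) ∂m := by
    rw [integral_add (IK.const_mul _) (IwK.const_mul _), integral_const_mul, integral_const_mul]
  have Iz12 : Integrable (fun z : EuclideanSpace ℝ (Fin d) × EuclideanSpace ℝ (Fin d) =>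
      ‖z.1‖ ^ α + ‖z.2‖ ^ α) m := Iz1α.add Iz2α
  have Iwz12 : Integrable (fun z : EuclideanSpace ℝ (Fin d) × EuclideanSpace ℝ (Fin d) =>
      ‖z.1 - z.2‖ * ‖z.1‖ ^ α + ‖z.1 - z.2‖ * ‖z.2‖ ^ α) m := Iwz1.add Iwz2
  have momμ : ∫ z, ‖z.1‖ ^ α ∂m ≤ momentP (α + 1) μ ^ α := by
    have e : ∫ z, ‖z.1‖ ^ α ∂m = ∫ u, ‖u‖ ^ α ∂μ := by
      rw [← h1, integral_map hfst
        (continuous_norm.rpow_const fun _ => Or.inr hα.le).aestronglyMeasurable]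
    rw [e]; exact aux_moment hα hμ
  have momν : ∫ z, ‖z.2‖ ^ α ∂m ≤ momentP (α + 1) ν ^ α := by
    have e : ∫ z, ‖z.2‖ ^ α ∂m = ∫ u, ‖u‖ ^ α ∂ν := by
      rw [← h2, integral_map hsnd
        (continuous_norm.rpow_const fun _ => Or.inr hα.le).aestronglyMeasurable]
    rw [e]; exact aux_moment hα hν
  have hK : ∫ z, (1 + ‖x‖ ^ α + ‖y‖ ^ α + ‖z.1‖ ^ α + ‖z.2‖ ^ α) ∂m
      ≤ 1 + ‖x‖ ^ α + ‖y‖ ^ α + momentP (α + 1) μ ^ α + momentP (α + 1) ν ^ α := by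
    rw [regK, integral_add (integrable_const _) Iz12, integral_add Iz1α Iz2α,
      integral_const]
    simp only [measure_univ, probReal_univ, ENNReal.toReal_one, one_smul, smul_eq_mul, one_mul]
    linarith
  have hw1 : ∫ z, ‖z.1 - z.2‖ ∂m ≤ (∫ z, ‖z.1 - z.2‖ ^ (α + 1) ∂m) ^ (1 / (α + 1)) := by
    have h := aux_holder (m := m) hα (fun z => norm_nonneg _) (fun _ => zero_le_one)
      cw.aestronglyMeasurable aestronglyMeasurable_const Iwp (integrable_const _)
    simpa [Real.one_rpow] using h
  have hw2 : ∫ z, ‖z.1 - z.2‖ * ‖z.1‖ ^ α ∂m ≤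
      (∫ z, ‖z.1 - z.2‖ ^ (α + 1) ∂m) ^ (1 / (α + 1)) * momentP (α + 1) μ ^ α := by
    have h := aux_holder (m := m) hα (fun z => norm_nonneg _) (fun z => norm_nonneg z.1)
      cw.aestronglyMeasurable ((cn1.rpow_const fun _ => Or.inr hα.le).aestronglyMeasurable)
      Iwp Iz1p
    have e : ∫ z, ‖z.1‖ ^ (α + 1) ∂m = ∫ u, ‖u‖ ^ (α + 1) ∂μ := by
      rw [← h1, integral_map hfst
        (continuous_norm.rpow_const fun _ => Or.inr hp0.le).aestronglyMeasurable]
    rw [e] at h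
    have e2 : (∫ u, ‖u‖ ^ (α + 1) ∂μ) ^ (1 / (α + 1) * α) = momentP (α + 1) μ ^ α := by
      unfold momentP
      rw [← Real.rpow_mul (integral_nonneg fun u => Real.rpow_nonneg (norm_nonneg u) _)]
    rw [e2] at h
    exact h
  have hw3 : ∫ z, ‖z.1 - z.2‖ * ‖z.2‖ ^ α ∂m ≤
      (∫ z, ‖z.1 - z.2‖ ^ (α + 1) ∂m) ^ (1 / (α + 1)) * momentP (α + 1) ν ^ α := by
    have h := aux_holder (m := m) hα (fun z => norm_nonneg _) (fun z => norm_nonneg z.2)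
      cw.aestronglyMeasurable ((cn2.rpow_const fun _ => Or.inr hα.le).aestronglyMeasurable)
      Iwp Iz2p
    have e : ∫ z, ‖z.2‖ ^ (α + 1) ∂m = ∫ u, ‖u‖ ^ (α + 1) ∂ν := by
      rw [← h2, integral_map hsnd
        (continuous_norm.rpow_const fun _ => Or.inr hp0.le).aestronglyMeasurable]
    rw [e] at h
    have e2 : (∫ u, ‖u‖ ^ (α + 1) ∂ν) ^ (1 / (α + 1) * α) = momentP (α + 1) ν ^ α := by
      unfold momentP
      rw [← Real.rpow_mul (integral_nonneg fun u => Real.rpow_nonneg (norm_nonneg u) _)]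
    rw [e2] at h
    exact h
  have hWnn : 0 ≤ (∫ z, ‖z.1 - z.2‖ ^ (α + 1) ∂m) ^ (1 / (α + 1)) :=
    Real.rpow_nonneg (integral_nonneg fun z => Real.rpow_nonneg (norm_nonneg _) _) _
  have hwK : ∫ z, ‖z.1 - z.2‖ * (1 + ‖x‖ ^ α + ‖y‖ ^ α + ‖z.1‖ ^ α + ‖z.2‖ ^ α) ∂m ≤
      (∫ z, ‖z.1 - z.2‖ ^ (α + 1) ∂m) ^ (1 / (α + 1)) *
        (1 + ‖x‖ ^ α + ‖y‖ ^ α + momentP (α + 1) μ ^ α + momentP (α + 1) ν ^ α) := by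
    rw [regwK, integral_add (Iw.const_mul _) Iwz12, integral_add Iwz1 Iwz2,
      integral_const_mul]
    have c0 : (0:ℝ) ≤ 1 + ‖x‖ ^ α + ‖y‖ ^ α := by positivity
    have b1 := mul_le_mul_of_nonneg_left hw1 c0
    nlinarith [hw2, hw3]
  calc ‖∫ z, (b x z.1 - b y z.2) ∂m‖
      ≤ g * ‖x - y‖ * (∫ z, (1 + ‖x‖ ^ α + ‖y‖ ^ α + ‖z.1‖ ^ α + ‖z.2‖ ^ α) ∂m) +
        g * ∫ z, ‖z.1 - z.2‖ * (1 + ‖x‖ ^ α + ‖y‖ ^ α + ‖z.1‖ ^ α + ‖z.2‖ ^ α) ∂m :=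
      step1.trans (le_of_eq step2)
    _ ≤ g * ‖x - y‖ *
          (1 + ‖x‖ ^ α + ‖y‖ ^ α + momentP (α + 1) μ ^ α + momentP (α + 1) ν ^ α) +
        g * ((∫ z, ‖z.1 - z.2‖ ^ (α + 1) ∂m) ^ (1 / (α + 1)) *
          (1 + ‖x‖ ^ α + ‖y‖ ^ α + momentP (α + 1) μ ^ α + momentP (α + 1) ν ^ α)) :=
      add_le_add (mul_le_mul_of_nonneg_left hK (mul_nonneg hg (norm_nonneg _)))
        (mul_le_mul_of_nonneg_left hwK hg)
    _ = g * (‖x - y‖ + (∫ z, ‖z.1 - z.2‖ ^ (α + 1) ∂m) ^ (1 / (α + 1))) *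
          (1 + ‖x‖ ^ α + ‖y‖ ^ α + momentP (α + 1) μ ^ α + momentP (α + 1) ν ^ α) := by
      ring

theorem stmt_11 {d : ℕ} (g α : ℝ) (hg : 0 ≤ g) (hα : 0 < α)
    (b : EuclideanSpace ℝ (Fin d) → EuclideanSpace ℝ (Fin d) → EuclideanSpace ℝ (Fin d))
    (hb : ∀ x y x' y', ‖b x x' - b y y'‖ ≤
      g * (‖x - y‖ + ‖x' - y'‖) * (1 + ‖x‖ ^ α + ‖y‖ ^ α + ‖x'‖ ^ α + ‖y'‖ ^ α))
    (μ ν : Measure (EuclideanSpace ℝ (Fin d)))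
    [IsProbabilityMeasure μ] [IsProbabilityMeasure ν]
    (hμ : Integrable (fun x => ‖x‖ ^ (α + 1)) μ)
    (hν : Integrable (fun x => ‖x‖ ^ (α + 1)) ν)
    (hbμ : ∀ x, Integrable (fun x' => b x x') μ)
    (hbν : ∀ x, Integrable (fun x' => b x x') ν)
    (x y : EuclideanSpace ℝ (Fin d)) :
    ‖(∫ x', b x x' ∂μ) - ∫ x', b y x' ∂ν‖ ≤
      g * (‖x - y‖ + wassersteinDist (α + 1) μ ν) *
        (1 + ‖x‖ ^ α + ‖y‖ ^ α + momentP (α + 1) μ ^ α + momentP (α + 1) ν ^ α) := by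
  have hSnn : (0:ℝ) ≤ 1 + ‖x‖ ^ α + ‖y‖ ^ α + momentP (α + 1) μ ^ α
      + momentP (α + 1) ν ^ α := by
    have h1 := Real.rpow_nonneg (norm_nonneg x) α
    have h2 := Real.rpow_nonneg (norm_nonneg y) α
    have h3 : 0 ≤ momentP (α + 1) μ ^ α := Real.rpow_nonneg
      (Real.rpow_nonneg (integral_nonneg fun u => Real.rpow_nonneg (norm_nonneg u) _) _) _
    have h4 : 0 ≤ momentP (α + 1) ν ^ α := Real.rpow_nonneg
      (Real.rpow_nonneg (integral_nonneg fun u => Real.rpow_nonneg (norm_nonneg u) _) _) _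
    linarith
  have hne : {c : ℝ | ∃ m : Measure (EuclideanSpace ℝ (Fin d) × EuclideanSpace ℝ (Fin d)),
      IsProbabilityMeasure m ∧ IsCoupling m μ ν ∧
      c = (∫ z, ‖z.1 - z.2‖ ^ (α + 1) ∂m) ^ (1 / (α + 1))}.Nonempty := by
    refine ⟨_, μ.prod ν, inferInstance, ⟨?_, ?_⟩, rfl⟩
    · simp [Measure.map_fst_prod]
    · simp [Measure.map_snd_prod]
  have key : ∀ c ∈ {c : ℝ | ∃ m : Measure (EuclideanSpace ℝ (Fin d) × EuclideanSpace ℝ (Fin d)),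
      IsProbabilityMeasure m ∧ IsCoupling m μ ν ∧
      c = (∫ z, ‖z.1 - z.2‖ ^ (α + 1) ∂m) ^ (1 / (α + 1))},
      ‖(∫ x', b x x' ∂μ) - ∫ x', b y x' ∂ν‖ ≤ g * (‖x - y‖ + c) *
        (1 + ‖x‖ ^ α + ‖y‖ ^ α + momentP (α + 1) μ ^ α + momentP (α + 1) ν ^ α) := by
    rintro c ⟨m, hm, ⟨hc1, hc2⟩, rfl⟩
    haveI := hm
    exact core g α hg hα b hb μ ν hμ hν hbμ hbν x y m hc1 hc2
  rcases hne with ⟨c0, hc0⟩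
  rcases eq_or_lt_of_le hg with h0 | hgpos
  · have h := key c0 hc0
    rw [← h0] at h ⊢
    simpa using h
  · have hSpos : 0 < 1 + ‖x‖ ^ α + ‖y‖ ^ α + momentP (α + 1) μ ^ α
        + momentP (α + 1) ν ^ α := by
      have h1 := Real.rpow_nonneg (norm_nonneg x) α
      have h3 : 0 ≤ momentP (α + 1) μ ^ α := Real.rpow_nonneg
        (Real.rpow_nonneg (integral_nonneg fun u => Real.rpow_nonneg (norm_nonneg u) _) _) _
      have h2 := Real.rpow_nonneg (norm_nonneg y) α
      have h4 : 0 ≤ momentP (α + 1) ν ^ α := Real.rpow_nonneg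
        (Real.rpow_nonneg (integral_nonneg fun u => Real.rpow_nonneg (norm_nonneg u) _) _) _
      linarith
    set S := 1 + ‖x‖ ^ α + ‖y‖ ^ α + momentP (α + 1) μ ^ α + momentP (α + 1) ν ^ α with hSdef
    set D := ‖(∫ x', b x x' ∂μ) - ∫ x', b y x' ∂ν‖ with hDdef
    have hgS : 0 < g * S := mul_pos hgpos hSpos
    have hlb : ∀ c ∈ {c : ℝ | ∃ m : Measure (EuclideanSpace ℝ (Fin d) × EuclideanSpace ℝ (Fin d)),
        IsProbabilityMeasure m ∧ IsCoupling m μ ν ∧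
        c = (∫ z, ‖z.1 - z.2‖ ^ (α + 1) ∂m) ^ (1 / (α + 1))},
        (D - g * ‖x - y‖ * S) / (g * S) ≤ c := by
      intro c hc
      have h := key c hc
      rw [div_le_iff₀ hgS]
      have e : g * (‖x - y‖ + c) * S = g * ‖x - y‖ * S + c * (g * S) := by ring
      linarith [e ▸ h]
    have hW : (D - g * ‖x - y‖ * S) / (g * S) ≤ wassersteinDist (α + 1) μ ν := by
      rw [wassersteinDist]
      exact le_csInf ⟨c0, hc0⟩ hlb
    rw [div_le_iff₀ hgS] at hW
    have e : g * (‖x - y‖ + wassersteinDist (α + 1) μ ν) * S =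
        g * ‖x - y‖ * S + wassersteinDist (α + 1) μ ν * (g * S) := by ring
    rw [e]
    linarith
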